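/- Let G be a finite p-group and i ≥ 0. Define K_i as the intersection of H' over all subgroups H of G of index p^i, where H' denotes the commutator subgroup of H. Then K_i is contained in the kernel of every irreducible complex representation of G of dimension at most p^i. -/

import Mathlib

open Module

lemma sum_finrank_le_finrank {V : Type*} [AddCommGroup V] [Module ℂ V] [FiniteDimensional ℂ V]
    {ι : Type*} (p : ι → Submodule ℂ V) (hp : iSupIndep p) (s : Finset ι) :
    ∑ i ∈ s, finrank ℂ (p i) ≤ finrank ℂ V := by
  classical
  have key : ∑ i ∈ s, finrank ℂ (p i) = finrank ℂ ↥(s.sup p) := by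
    induction s using Finset.induction_on with
    | empty => rw [Finset.sum_empty, Finset.sup_empty, finrank_bot]
    | @insert a s ha ih =>
      rw [Finset.sum_insert ha, Finset.sup_insert, ih]
      have hdis : Disjoint (p a) (s.sup p) := by
        refine (hp a).mono_right ?_
        exact Finset.sup_le fun j hj => le_iSup₂ (f := fun j (_ : j ≠ a) => p j) j
          (fun h => ha (h ▸ hj))
      have := Submodule.finrank_sup_add_finrank_inf_eq (p a) (s.sup p)
      rw [hdis.eq_bot] at this
      simp only [finrank_bot, add_zero] at this
      omega
  rw [key]
  exact Submodule.finrank_le _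

open Module

lemma my_index_map_subtype {G : Type*} [Group G] [Finite G] (T : Subgroup G) (H : Subgroup T) :
    (H.map T.subtype).index = T.index * H.index := by
  have h1 : (H.map T.subtype).index * Nat.card (H.map T.subtype) = Nat.card G :=
    Subgroup.index_mul_card _
  have h2 : T.index * Nat.card T = Nat.card G := Subgroup.index_mul_card _
  have h3 : H.index * Nat.card H = Nat.card T := Subgroup.index_mul_card _
  have hc : Nat.card (H.map T.subtype) = Nat.card H :=
    Nat.card_congr (H.equivMapOfInjective T.subtype T.subtype_injective).toEquiv.symm
  have hpos : 0 < Nat.card H := Nat.card_pos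
  rw [hc] at h1
  nlinarith [h1, h2, h3]

lemma my_index_map_conj {G : Type*} [Group G] [Finite G] (L : Subgroup G) (x : G) :
    (L.map (MulAut.conj x).toMonoidHom).index = L.index := by
  have h1 : (L.map (MulAut.conj x).toMonoidHom).index * Nat.card (L.map (MulAut.conj x).toMonoidHom)
      = Nat.card G := Subgroup.index_mul_card _
  have h2 : L.index * Nat.card L = Nat.card G := Subgroup.index_mul_card _
  have hc : Nat.card (L.map (MulAut.conj x).toMonoidHom) = Nat.card L :=
    Nat.card_congr (L.equivMapOfInjective _ (MulAut.conj x).injective).toEquiv.symm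
  have hpos : 0 < Nat.card L := Nat.card_pos
  rw [hc] at h1
  nlinarith [h1, h2]

/-- restriction of a representation to a subgroup acting on an invariant subspace -/
noncomputable def subRep {G : Type*} [Group G] {V : Type*} [AddCommGroup V] [Module ℂ V]
    (ρ : Representation ℂ G V) (T : Subgroup G) (W : Submodule ℂ V)
    (hW : ∀ t : T, ∀ w ∈ W, ρ (t : G) w ∈ W) : Representation ℂ T W where
  toFun t := (ρ (t : G)).restrict (fun w hw => hW t w hw)
  map_one' := by
    ext w
    simp [LinearMap.restrict_apply]
  map_mul' s t := by
    ext w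
    simp [LinearMap.restrict_apply]

@[simp] lemma subRep_apply {G : Type*} [Group G] {V : Type*} [AddCommGroup V] [Module ℂ V]
    (ρ : Representation ℂ G V) (T : Subgroup G) (W : Submodule ℂ V)
    (hW : ∀ t : T, ∀ w ∈ W, ρ (t : G) w ∈ W) (t : T) (w : W) :
    (subRep ρ T W hW t w : V) = ρ (t : G) (w : V) := rfl

universe u v

section helpers

variable {G : Type u} [Group G] {V : Type v} [AddCommGroup V] [Module ℂ V]

lemma rep_comp (ρ : Representation ℂ G V) (a b : G) (w : V) :
    ρ a (ρ b w) = ρ (a * b) w := by rw [map_mul]; rfl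

lemma rep_one_apply (ρ : Representation ℂ G V) (w : V) : ρ 1 w = w := by
  rw [map_one]; rfl

lemma rep_injective (ρ : Representation ℂ G V) (g : G) : Function.Injective (ρ g) := by
  intro a b h
  have := congrArg (ρ g⁻¹) h
  rwa [rep_comp, rep_comp, inv_mul_cancel, rep_one_apply, rep_one_apply] at this

end helpers
lemma key {p : ℕ} (hp : p.Prime) :
    ∀ (n : ℕ) (G : Type u) (_ : Group G) (_ : Finite G), IsPGroup p G → Nat.card G ≤ n →
    ∀ (V : Type v) (_ : AddCommGroup V) (_ : Module ℂ V) (_ : FiniteDimensional ℂ V)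
    (_ : Nontrivial V) (ρ : Representation ℂ G V),
    (∀ W : Submodule ℂ V, (∀ (g : G) (w : V), w ∈ W → ρ g w ∈ W) → W = ⊥ ∨ W = ⊤) →
    ∃ (H : Subgroup G) (v : V), v ≠ 0 ∧ (∀ h ∈ H, ∃ c : ℂ, ρ h v = c • v)
      ∧ H.index ≤ finrank ℂ V := by
  intro n
  induction n with
  | zero =>
    intro G _ _ _ hn
    exact absurd hn (by simpa using Nat.card_pos.ne')
  | succ n IH =>
    intro G _ _ hG hn V _ _ _ _ ρ hsimp
    classical
    haveI : Fact p.Prime := ⟨hp⟩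
    by_cases hsc : ∀ g : G, ∃ c : ℂ, ∀ v : V, ρ g v = c • v
    · obtain ⟨v, hv⟩ := exists_ne (0 : V)
      refine ⟨⊤, v, hv, fun h _ => (hsc h).imp fun c hc => hc v, ?_⟩
      rw [Subgroup.index_top]
      exact Module.finrank_pos
    · -- the subgroup of scalar-acting elements
      let Z : Subgroup G :=
        { carrier := {g | ∃ c : ℂ, ∀ w : V, ρ g w = c • w}
          one_mem' := ⟨1, fun w => by rw [rep_one_apply, one_smul]⟩
          mul_mem' := by
            rintro a b ⟨c, hc⟩ ⟨d, hd⟩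
            exact ⟨c * d, fun w => by
              rw [← rep_comp, hd, map_smul, hc, smul_smul, mul_comm c d]⟩
          inv_mem' := by
            rintro a ⟨c, hc⟩
            have hc0 : c ≠ 0 := by
              intro h0
              obtain ⟨w, hw⟩ := exists_ne (0 : V)
              exact hw (rep_injective ρ a (by rw [hc w, h0, zero_smul, map_zero]))
            refine ⟨c⁻¹, fun w => rep_injective ρ a ?_⟩
            rw [rep_comp, mul_inv_cancel, rep_one_apply, map_smul, hc, smul_smul,
              inv_mul_cancel₀ hc0, one_smul] }
      have hZmem : ∀ g : G, g ∈ Z ↔ ∃ c : ℂ, ∀ w : V, ρ g w = c • w := fun g => Iff.rfl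
      haveI hZN : Z.Normal := by
        constructor
        rintro a ⟨c, hc⟩ g
        refine ⟨c, fun w => ?_⟩
        rw [← rep_comp, ← rep_comp, hc, map_smul, rep_comp,
          mul_inv_cancel, rep_one_apply]
      have hZtop : Z ≠ ⊤ := by
        intro h
        exact hsc fun g => (hZmem g).mp (h ▸ Subgroup.mem_top g)
      obtain ⟨g₀, hg₀⟩ : ∃ g : G, g ∉ Z := by
        by_contra h
        push_neg at h
        exact hZtop ((Subgroup.eq_top_iff' Z).mpr h)
      haveI : Nontrivial (G ⧸ Z) :=
        ⟨(g₀ : G ⧸ Z), 1, by simpa [QuotientGroup.eq_one_iff] using hg₀⟩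
      haveI := IsPGroup.center_nontrivial (hG.to_quotient Z)
      obtain ⟨z, hz1⟩ := exists_ne (1 : Subgroup.center (G ⧸ Z))
      obtain ⟨x, hxz⟩ := QuotientGroup.mk_surjective (z : G ⧸ Z)
      have hx : x ∉ Z := by
        intro h
        have h1 : ((z : G ⧸ Z)) = 1 := by rw [← hxz]; exact (QuotientGroup.eq_one_iff x).mpr h
        exact hz1 (Subtype.ext (by simp [h1]))
      have hcom : ∀ g : G, g * x * g⁻¹ * x⁻¹ ∈ Z := by
        intro g
        rw [← QuotientGroup.eq_one_iff]
        have hc := Subgroup.mem_center_iff.mp z.2 ((g : G ⧸ Z))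
        rw [← hxz] at hc
        have h2 : ((g * x * g⁻¹ * x⁻¹ : G) : G ⧸ Z)
            = (g : G ⧸ Z) * (x : G ⧸ Z) * ((g : G ⧸ Z))⁻¹ * ((x : G ⧸ Z))⁻¹ := by simp
        rw [h2, hc]
        group
      obtain ⟨v₀, hv₀⟩ := exists_ne (0 : V)
      have hxv₀ : ρ x v₀ ≠ 0 := fun h => hv₀ (rep_injective ρ x (by rw [h, map_zero]))
      -- the scalar cocycle
      have hφex : ∀ g : G, ∃ c : ℂ, ∀ w : V, ρ (g * x * g⁻¹) w = c • ρ x w := by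
        intro g
        obtain ⟨c, hc⟩ := hcom g
        refine ⟨c, fun w => ?_⟩
        have : ρ (g * x * g⁻¹) w = ρ (g * x * g⁻¹ * x⁻¹) (ρ x w) := by
          rw [rep_comp]; group
        rw [this, hc]
      choose φ hφ using hφex
      have hφ0 : ∀ g : G, φ g ≠ 0 := by
        intro g h0
        have := hφ g v₀
        rw [h0, zero_smul] at this
        exact hv₀ (rep_injective ρ (g * x * g⁻¹) (by rw [this, map_zero]))
      have huniq : ∀ c d : ℂ, c • ρ x v₀ = d • ρ x v₀ → c = d := fun c d h =>
        smul_left_injective ℂ hxv₀ h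
      have hφmul : ∀ g h : G, φ (g * h) = φ g * φ h := by
        intro g h
        refine huniq _ _ ?_
        have e1 : ρ (g * h * x * (g * h)⁻¹) v₀ = φ (g * h) • ρ x v₀ := hφ (g * h) v₀
        have e2 : ρ (g * h * x * (g * h)⁻¹) v₀ = (φ g * φ h) • ρ x v₀ := by
          have : g * h * x * (g * h)⁻¹ = g * (h * x * h⁻¹) * g⁻¹ := by group
          rw [this, ← rep_comp, ← rep_comp, hφ h, map_smul, rep_comp, rep_comp, hφ g,
            smul_smul, mul_comm (φ h) (φ g)]
        rw [← e1, e2]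
      have hφ1 : φ 1 = 1 := by
        refine huniq _ _ ?_
        have := hφ 1 v₀
        rw [one_mul, inv_one, mul_one] at this
        rw [← this, one_smul]
      let ψ : G →* ℂˣ :=
        { toFun := fun g => Units.mk0 (φ g) (hφ0 g)
          map_one' := Units.ext (by simpa using hφ1)
          map_mul' := fun g h => Units.ext (by simpa using hφmul g h) }
      let T : Subgroup G := ψ.ker
      have hTmem : ∀ g : G, g ∈ T ↔ φ g = 1 := by
        intro g
        rw [MonoidHom.mem_ker, Units.ext_iff]
        simp [ψ]
      -- the eigenspace
      obtain ⟨c₀, hc₀⟩ := Module.End.exists_eigenvalue (ρ x : Module.End ℂ V)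
      set E := Module.End.eigenspace (ρ x : Module.End ℂ V) c₀ with hEdef
      have hE : E ≠ ⊥ := Module.End.hasEigenvalue_iff.mp hc₀
      obtain ⟨w₀, hw₀mem, hw₀⟩ := hc₀.exists_hasEigenvector
      have hc₀0 : c₀ ≠ 0 := by
        intro h
        have he : ρ x w₀ = 0 := by
          have := Module.End.mem_eigenspace_iff.mp hw₀mem
          rw [h, zero_smul] at this
          exact this
        exact hw₀ (rep_injective ρ x (by rw [he, map_zero]))
      have hmap : ∀ (g : G) (w : V), w ∈ E →
          ρ g w ∈ Module.End.eigenspace (ρ x : Module.End ℂ V) ((φ g)⁻¹ * c₀) := by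
        intro g w hw
        rw [hEdef] at hw
        rw [Module.End.mem_eigenspace_iff] at hw ⊢
        have e1 : ρ (g * x * g⁻¹) (ρ g w) = φ g • ρ x (ρ g w) := hφ g (ρ g w)
        have e2 : ρ (g * x * g⁻¹) (ρ g w) = c₀ • ρ g w := by
          rw [rep_comp]
          have : g * x * g⁻¹ * g = g * x := by group
          rw [this, ← rep_comp, hw, map_smul]
        have : (ρ x : Module.End ℂ V) (ρ g w) = ρ x (ρ g w) := rfl
        rw [this, ← inv_smul_smul₀ (hφ0 g) (ρ x (ρ g w)), ← e1, e2, smul_smul]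
      have hTE : ∀ t : G, t ∈ T → ∀ w ∈ E, ρ t w ∈ E := by
        intro t ht w hw
        have := hmap t w hw
        rwa [(hTmem t).mp ht, inv_one, one_mul] at this
      have hTtop : T ≠ ⊤ := by
        intro h
        have hEinv : ∀ (g : G) (w : V), w ∈ E → ρ g w ∈ E := fun g w hw =>
          hTE g (h ▸ Subgroup.mem_top g) w hw
        rcases hsimp E hEinv with h1 | h1
        · exact hE h1
        · refine hx ((hZmem x).mpr ⟨c₀, fun w => Module.End.mem_eigenspace_iff.mp ?_⟩)
          rw [← hEdef, h1]
          exact Submodule.mem_top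
      -- index times eigenspace dimension is at most the total dimension
      set m := finrank ℂ E with hmdef
      haveI : Fintype (G ⧸ T) := Fintype.ofFinite _
      let μmap : G ⧸ T → ℂ := Quotient.lift (fun g => (φ g)⁻¹ * c₀) (by
        intro a b hab
        have h1 : φ (a⁻¹ * b) = 1 := (hTmem _).mp (QuotientGroup.leftRel_apply.mp hab)
        have h2 : φ a * φ (a⁻¹ * b) = φ b := by
          rw [← hφmul]; congr 1; group
        rw [h1, mul_one] at h2
        show (φ a)⁻¹ * c₀ = (φ b)⁻¹ * c₀
        rw [h2])
      have hμmk : ∀ g : G, μmap (g : G ⧸ T) = (φ g)⁻¹ * c₀ := fun g => rfl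
      have hμinj : Function.Injective μmap := by
        have key2 : ∀ a b : G, μmap (a : G ⧸ T) = μmap (b : G ⧸ T) → (a : G ⧸ T) = b := by
          intro a b hab
          have hab' : (φ a)⁻¹ * c₀ = (φ b)⁻¹ * c₀ := hab
          have hphi : φ a = φ b := inv_injective (mul_right_cancel₀ hc₀0 hab')
          apply Quotient.sound'
          rw [QuotientGroup.leftRel_apply]
          refine (hTmem _).mpr ?_
          have h2 : φ a * φ (a⁻¹ * b) = φ b := by
            rw [← hφmul]; congr 1; group
          rw [hphi] at h2
          exact mul_left_cancel₀ (hφ0 b) (by rw [h2, mul_one])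
        intro q1 q2
        induction q1 using QuotientGroup.induction_on
        induction q2 using QuotientGroup.induction_on
        rename_i a b
        exact key2 a b
      have hdimq : ∀ q : G ⧸ T,
          m ≤ finrank ℂ (Module.End.eigenspace (ρ x : Module.End ℂ V) (μmap q)) := by
        intro q
        induction q using QuotientGroup.induction_on
        rename_i g
        rw [hμmk]
        have hres : ∀ w ∈ E, ρ g w ∈ Module.End.eigenspace (ρ x : Module.End ℂ V)
            ((φ g)⁻¹ * c₀) := fun w hw => hmap g w hw
        let L : E →ₗ[ℂ] Module.End.eigenspace (ρ x : Module.End ℂ V) ((φ g)⁻¹ * c₀) :=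
          (ρ g).restrict hres
        have hLinj : Function.Injective L := by
          intro a b hab
          have : ρ g (a : V) = ρ g (b : V) := congrArg Subtype.val hab
          exact Subtype.ext (rep_injective ρ g this)
        exact LinearMap.finrank_le_finrank_of_injective hLinj
      have hcount : T.index * m ≤ finrank ℂ V := by
        let s : Finset ℂ := Finset.univ.image μmap
        have hcards : s.card = T.index := by
          rw [Finset.card_image_of_injective _ hμinj, Finset.card_univ,
            ← Nat.card_eq_fintype_card]
          rfl
        have h1 : ∑ μ ∈ s, finrank ℂ (Module.End.eigenspace (ρ x : Module.End ℂ V) μ)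
            ≤ finrank ℂ V :=
          sum_finrank_le_finrank _ (Module.End.eigenspaces_iSupIndep (ρ x : Module.End ℂ V)) s
        have h2 : s.card • m ≤ ∑ μ ∈ s,
            finrank ℂ (Module.End.eigenspace (ρ x : Module.End ℂ V) μ) := by
          refine Finset.card_nsmul_le_sum s _ m ?_
          intro μ hμ
          obtain ⟨q, _, rfl⟩ := Finset.mem_image.mp hμ
          exact hdimq q
        calc T.index * m = s.card • m := by rw [hcards, smul_eq_mul]
          _ ≤ _ := h2
          _ ≤ _ := h1
      -- minimal invariant nonzero subspace of E
      let P : ℕ → Prop := fun k => ∃ W : Submodule ℂ V, W ≤ E ∧ W ≠ ⊥ ∧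
        (∀ t : T, ∀ w ∈ W, ρ (t : G) w ∈ W) ∧ finrank ℂ W = k
      have hPE : P m := ⟨E, le_rfl, hE, fun t w hw => hTE (t : G) t.2 w hw, rfl⟩
      have hPex : ∃ k, P k := ⟨m, hPE⟩
      obtain ⟨W, hWE, hW0, hWinv, hWrank⟩ := Nat.find_spec hPex
      have hWmin : ∀ k, P k → Nat.find hPex ≤ k := fun k hk => Nat.find_min' hPex hk
      have hWm : finrank ℂ W ≤ m := Submodule.finrank_mono hWE
      haveI : Nontrivial W := Submodule.nontrivial_iff_ne_bot.mpr hW0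
      -- the restricted representation is simple
      let ρW := subRep ρ T W hWinv
      have hsimpW : ∀ U : Submodule ℂ W, (∀ (t : T) (w : W), w ∈ U → ρW t w ∈ U) →
          U = ⊥ ∨ U = ⊤ := by
        intro U hU
        by_cases hUbot : U = ⊥
        · exact Or.inl hUbot
        right
        let U' := U.map W.subtype
        have hU'W : U' ≤ W := Submodule.map_subtype_le W U
        have hU'E : U' ≤ E := le_trans hU'W hWE
        have hU'0 : U' ≠ ⊥ := by
          obtain ⟨u, hu, hu0⟩ := Submodule.exists_mem_ne_zero_of_ne_bot hUbot
          refine Submodule.ne_bot_iff _ |>.mpr ⟨(u : V), Submodule.mem_map_of_mem hu, ?_⟩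
          simpa using hu0
        have hU'inv : ∀ t : T, ∀ w ∈ U', ρ (t : G) w ∈ U' := by
          rintro t w ⟨u, hu, rfl⟩
          have h3 : ρ (t : G) (W.subtype u) = W.subtype (ρW t u) := rfl
          rw [h3]
          exact Submodule.mem_map_of_mem (hU t u hu)
        have hk : Nat.find hPex ≤ finrank ℂ U' := hWmin _ ⟨U', hU'E, hU'0, hU'inv, rfl⟩
        have heq : U' = W := by
          refine Submodule.eq_of_le_of_finrank_le hU'W ?_
          rw [hWrank]
          exact hk
        have : U.map W.subtype = (⊤ : Submodule ℂ W).map W.subtype := by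
          rw [Submodule.map_subtype_top]
          exact heq
        exact Submodule.map_injective_of_injective W.injective_subtype this
      -- apply induction to T acting on W
      have hTcard : Nat.card T < Nat.card G := by
        have h2 : T.index * Nat.card T = Nat.card G := Subgroup.index_mul_card _
        have hne1 : T.index ≠ 1 := fun h => hTtop (Subgroup.index_eq_one.mp h)
        have hne0 : T.index ≠ 0 := Subgroup.index_ne_zero_of_finite
        have hpos : 0 < Nat.card T := Nat.card_pos
        have h3 : 2 ≤ T.index := by omega
        calc Nat.card T < 2 * Nat.card T := by omega
          _ ≤ T.index * Nat.card T := Nat.mul_le_mul_right _ h3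
          _ = Nat.card G := h2
      obtain ⟨H', v, hv0, heigv, hHind⟩ := IH T inferInstance inferInstance
        (hG.to_subgroup T) (by omega) W inferInstance inferInstance inferInstance
        inferInstance ρW hsimpW
      refine ⟨H'.map T.subtype, (v : V), by simpa using hv0, ?_, ?_⟩
      · rintro h ⟨h', hh', rfl⟩
        obtain ⟨c, hc⟩ := heigv h' hh'
        refine ⟨c, ?_⟩
        have := congrArg (Subtype.val : W → V) hc
        exact this
      · rw [my_index_map_subtype]
        calc T.index * H'.index ≤ T.index * finrank ℂ W :=
              Nat.mul_le_mul_left _ hHind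
          _ ≤ T.index * m := Nat.mul_le_mul_left _ hWm
          _ ≤ finrank ℂ V := hcount

open scoped commutatorElement

section bridge

variable {G : Type u} [Group G] {V : Type v} [AddCommGroup V] [Module ℂ V]

lemma invariant_asAlgebraHom (ρ : Representation ℂ G V) (W : Submodule ℂ V)
    (hW : ∀ (g : G) (w : V), w ∈ W → ρ g w ∈ W)
    (r : MonoidAlgebra ℂ G) (w : V) (hw : w ∈ W) : ρ.asAlgebraHom r w ∈ W := by
  induction r using MonoidAlgebra.induction with
  | zero => simp only [map_zero, LinearMap.zero_apply]; exact W.zero_mem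
  | single_add g c f _ _ ih =>
    rw [map_add, LinearMap.add_apply]
    refine W.add_mem ?_ ih
    rw [Representation.asAlgebraHom_single]
    exact W.smul_mem c (hW g w hw)

lemma simple_to_invariant (ρ : Representation ℂ G V)
    (hirr : IsSimpleModule (MonoidAlgebra ℂ G) ρ.asModule) :
    Nontrivial V ∧
      ∀ W : Submodule ℂ V, (∀ (g : G) (w : V), w ∈ W → ρ g w ∈ W) → W = ⊥ ∨ W = ⊤ := by
  haveI : Nontrivial ρ.asModule := IsSimpleModule.nontrivial (MonoidAlgebra ℂ G) ρ.asModule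
  constructor
  · exact ρ.asModuleEquiv.toEquiv.symm.nontrivial
  intro W hW
  let WM : Submodule (MonoidAlgebra ℂ G) ρ.asModule :=
    { carrier := {x : ρ.asModule | ρ.asModuleEquiv x ∈ W}
      add_mem' := fun {a b} ha hb => by
        simp only [Set.mem_setOf_eq, map_add] at *
        exact W.add_mem ha hb
      zero_mem' := by simp only [Set.mem_setOf_eq, map_zero]; exact W.zero_mem
      smul_mem' := fun r x hx => by
        simp only [Set.mem_setOf_eq] at *
        rw [ρ.asModuleEquiv_map_smul]
        exact invariant_asAlgebraHom ρ W hW r _ hx }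
  have hmem : ∀ x : ρ.asModule, x ∈ WM ↔ ρ.asModuleEquiv x ∈ W := fun x => Iff.rfl
  rcases eq_bot_or_eq_top WM with h | h
  · left
    ext w
    simp only [Submodule.mem_bot]
    constructor
    · intro hw
      have hx : ρ.asModuleEquiv.symm w ∈ WM := by rw [hmem]; simpa using hw
      rw [h, Submodule.mem_bot] at hx
      simpa using congrArg ρ.asModuleEquiv hx
    · rintro rfl; exact W.zero_mem
  · right
    ext w
    simp only [Submodule.mem_top, iff_true]
    have hx : ρ.asModuleEquiv.symm w ∈ WM := by rw [h]; trivial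
    rw [hmem] at hx
    simpa using hx

end bridge
/-- Let `G` be a finite p-group and `K_i = ⋂ { [H,H] : H ≤ G, [G:H] = p^i }`.
Then `K_i` is contained in the kernel of every irreducible complex
representation of `G` of dimension at most `p^i`. -/
theorem stmt2 {p : ℕ} (hp : p.Prime) {G : Type*} [Group G] [Finite G]
    (hG : IsPGroup p G) (i : ℕ) (hpi : p ^ i ≤ Nat.card G)
    (V : Type*) [AddCommGroup V] [Module ℂ V] [FiniteDimensional ℂ V]
    (ρ : Representation ℂ G V)
    (hirr : IsSimpleModule (MonoidAlgebra ℂ G) ρ.asModule)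
    (hdim : Module.finrank ℂ V ≤ p ^ i) :
    ∀ g ∈ ⨅ H ∈ {H : Subgroup G | H.index = p ^ i}, ⁅H, H⁆, ρ g = 1 := by
  intro g hg
  haveI : Fact p.Prime := ⟨hp⟩
  classical
  obtain ⟨hntV, hsimp⟩ := simple_to_invariant ρ hirr
  obtain ⟨H, v, hv0, heig, hHle⟩ := key hp (Nat.card G) G ‹_› ‹_› hG le_rfl V ‹_› ‹_› ‹_›
    hntV ρ hsimp
  -- find a subgroup `L ≤ H` of index exactly `p ^ i`
  obtain ⟨a, hcardG⟩ := hG.exists_card_eq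
  have hia : i ≤ a := by
    rw [hcardG] at hpi
    exact (Nat.pow_le_pow_iff_right hp.one_lt).mp hpi
  have hHmul : H.index * Nat.card H = p ^ a := by rw [Subgroup.index_mul_card, hcardG]
  obtain ⟨b, hb⟩ := (hG.to_subgroup H).exists_card_eq
  have haib : a - i ≤ b := by
    have h1 : H.index ≤ p ^ i := le_trans hHle hdim
    have h2 : p ^ a ≤ p ^ i * p ^ b := by
      rw [← hHmul, hb]
      exact Nat.mul_le_mul_right _ h1
    rw [← pow_add] at h2
    have := (Nat.pow_le_pow_iff_right hp.one_lt).mp h2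
    omega
  have hdvd : p ^ (a - i) ∣ Nat.card H := by
    rw [hb]
    exact pow_dvd_pow p haib
  obtain ⟨K, hK⟩ := Sylow.exists_subgroup_card_pow_prime p hdvd
  set L : Subgroup G := K.map H.subtype with hLdef
  have hLH : L ≤ H := Subgroup.map_subtype_le K
  have hLcard : Nat.card L = p ^ (a - i) := by
    rw [← hK]
    exact Nat.card_congr (K.equivMapOfInjective H.subtype H.subtype_injective).toEquiv.symm
  have hLindex : L.index = p ^ i := by
    have h1 : L.index * Nat.card L = p ^ a := by rw [Subgroup.index_mul_card, hcardG]
    rw [hLcard] at h1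
    have h2 : L.index * p ^ (a - i) = p ^ i * p ^ (a - i) := by
      rw [h1, ← pow_add]
      congr 1
      omega
    exact Nat.eq_of_mul_eq_mul_right (pow_pos hp.pos _) h2
  -- the fixator of v
  have heiginv : ∀ (k : G) (c : ℂ), c ≠ 0 → ρ k v = c • v → ρ k⁻¹ v = c⁻¹ • v := by
    intro k c hc0 hc
    apply rep_injective ρ k
    rw [rep_comp, mul_inv_cancel, rep_one_apply, map_smul, hc, smul_smul,
      inv_mul_cancel₀ hc0, one_smul]
  have heignz : ∀ (k : G) (c : ℂ), ρ k v = c • v → c ≠ 0 := by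
    intro k c hc h0
    rw [h0, zero_smul] at hc
    exact hv0 (rep_injective ρ k (by rw [hc, map_zero]))
  let P : Subgroup G :=
    { carrier := {k | ρ k v = v}
      one_mem' := rep_one_apply ρ v
      mul_mem' := by
        intro k₁ k₂ h1 h2
        show ρ (k₁ * k₂) v = v
        rw [← rep_comp, h2, h1]
      inv_mem' := by
        intro k h1
        show ρ k⁻¹ v = v
        apply rep_injective ρ k
        rw [rep_comp, mul_inv_cancel, rep_one_apply, h1] }
  have hLP : ⁅L, L⁆ ≤ P := by
    rw [Subgroup.commutator_le]
    intro g1 hg1 g2 hg2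
    obtain ⟨c1, hc1⟩ := heig g1 (hLH hg1)
    obtain ⟨c2, hc2⟩ := heig g2 (hLH hg2)
    have hc10 := heignz _ _ hc1
    have hc20 := heignz _ _ hc2
    show ρ ⁅g1, g2⁆ v = v
    have e1 : ρ g2⁻¹ v = c2⁻¹ • v := heiginv _ _ hc20 hc2
    have e2 : ρ g1⁻¹ (c2⁻¹ • v) = c2⁻¹ • (c1⁻¹ • v) := by
      rw [map_smul, heiginv _ _ hc10 hc1]
    have e3 : ρ g2 (c2⁻¹ • (c1⁻¹ • v)) = c2⁻¹ • (c1⁻¹ • (c2 • v)) := by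
      rw [map_smul, map_smul, hc2]
    have e4 : ρ g1 (c2⁻¹ • (c1⁻¹ • (c2 • v))) = c2⁻¹ • (c1⁻¹ • (c2 • (c1 • v))) := by
      rw [map_smul, map_smul, map_smul, hc1]
    rw [commutatorElement_def, ← rep_comp, ← rep_comp, ← rep_comp, e1, e2, e3, e4,
      smul_smul, smul_smul, smul_smul]
    have h5 : c2⁻¹ * c1⁻¹ * c2 * c1 = 1 := by
      field_simp
    rw [h5, one_smul]
  -- conjugates of L all have index p^i, so g acts trivially on every ρ x v
  have hconj : ∀ x : G, ρ ((x⁻¹ * g) * x) v = v := by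
    intro x
    set Lx : Subgroup G := L.map (MulAut.conj x).toMonoidHom with hLxdef
    have hLxind : Lx.index = p ^ i := by rw [hLxdef, my_index_map_conj, hLindex]
    have hgx : g ∈ ⁅Lx, Lx⁆ := by
      have h1 := Subgroup.mem_iInf.mp hg Lx
      exact Subgroup.mem_iInf.mp h1 hLxind
    rw [hLxdef, ← Subgroup.map_commutator] at hgx
    obtain ⟨y, hy, hyx⟩ := hgx
    have hxy : (x⁻¹ * g) * x = y := by
      have : (MulAut.conj x).toMonoidHom y = x * y * x⁻¹ := rfl
      rw [this] at hyx
      rw [← hyx]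
      group
    rw [hxy]
    exact hLP hy
  -- the span of the orbit of v is all of V
  set S : Submodule ℂ V := Submodule.span ℂ (Set.range fun x : G => ρ x v) with hSdef
  have hSinv : ∀ (g' : G) (w : V), w ∈ S → ρ g' w ∈ S := by
    intro g' w hw
    induction hw using Submodule.span_induction with
    | mem w hw =>
      obtain ⟨x, rfl⟩ := hw
      rw [rep_comp]
      exact Submodule.subset_span ⟨g' * x, rfl⟩
    | zero => rw [map_zero]; exact S.zero_mem
    | add u w _ _ hu hw => rw [map_add]; exact S.add_mem hu hw
    | smul c u _ hu => rw [map_smul]; exact S.smul_mem c hu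
  have hSne : S ≠ ⊥ := by
    intro h
    apply hv0
    have hvS : v ∈ S := Submodule.subset_span ⟨1, rep_one_apply ρ v⟩
    rwa [h, Submodule.mem_bot] at hvS
  have hStop : S = ⊤ := (hsimp S hSinv).resolve_left hSne
  -- conclude
  refine LinearMap.ext fun w => ?_
  rw [Module.End.one_apply]
  let F : Submodule ℂ V :=
    { carrier := {w | ρ g w = w}
      add_mem' := fun {u₁ u₂} h1 h2 => by
        show ρ g (u₁ + u₂) = u₁ + u₂
        rw [map_add, h1, h2]
      zero_mem' := map_zero _
      smul_mem' := fun c u h => by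
        show ρ g (c • u) = c • u
        rw [map_smul, h] }
  have hSF : S ≤ F := by
    rw [hSdef, Submodule.span_le]
    rintro w ⟨x, rfl⟩
    show ρ g (ρ x v) = ρ x v
    rw [rep_comp]
    have h1 : g * x = x * ((x⁻¹ * g) * x) := by group
    rw [h1, ← rep_comp, hconj x]
  have hFtop : F = ⊤ := top_unique (hStop ▸ hSF)
  have : w ∈ F := hFtop ▸ Submodule.mem_top
  exact this
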